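/- arXiv:2104.14808 — 2 statements merged into one kernel-verified Lean document; each statement's English description precedes it below -/
import Mathlib

section
/- Fix ε ≥ 0 and define g : (0,∞) → ℝ by g(x) = Φ(x/2 − ε/x) − e^ε Φ(−x/2 − ε/x), where Φ is the standard normal CDF. Then g is strictly monotonically increasing on (0,∞). -/
open MeasureTheory ProbabilityTheory Filter

noncomputable def frob {m n : ℕ} (M : Matrix (Fin m) (Fin n) ℝ) : ℝ :=
  Real.sqrt (∑ i, ∑ j, (M i j)^2)

noncomputable def sv {m n : ℕ} (M : Matrix (Fin m) (Fin n) ℝ) : Fin n → ℝ :=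
  fun i => Real.sqrt ((show (M.transpose * M).IsHermitian by
    simpa using Matrix.isHermitian_conjTranspose_mul_self M).eigenvalues i)

/-- `σ` is the non-increasingly ordered tuple of singular values of `M`. -/
def IsSVals {m n : ℕ} (M : Matrix (Fin m) (Fin n) ℝ) (σ : Fin n → ℝ) : Prop :=
  Antitone σ ∧ ∃ e : Equiv.Perm (Fin n), σ = sv M ∘ e

/-- Standard normal CDF. -/
noncomputable def Phi (t : ℝ) : ℝ :=
  (Real.sqrt (2 * Real.pi))⁻¹ * ∫ u in Set.Iic t, Real.exp (-u^2/2)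

lemma gauss_integrable : Integrable (fun u : ℝ => Real.exp (-u^2/2)) := by
  have := integrable_exp_neg_mul_sq (by norm_num : (0:ℝ) < 1/2)
  convert this using 2 with u
  ring

lemma hasDerivAt_Phi (t : ℝ) :
    HasDerivAt Phi ((Real.sqrt (2 * Real.pi))⁻¹ * Real.exp (-t^2/2)) t := by
  have hc : Continuous fun u : ℝ => Real.exp (-u^2/2) := by continuity
  have key : ∀ s : ℝ, Phi s = (Real.sqrt (2 * Real.pi))⁻¹ *
      ((∫ u in Set.Iic (0:ℝ), Real.exp (-u^2/2)) + ∫ u in (0:ℝ)..s, Real.exp (-u^2/2)) := by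
    intro s
    unfold Phi
    have := intervalIntegral.integral_Iic_sub_Iic
      (gauss_integrable.integrableOn (s := Set.Iic 0))
      (gauss_integrable.integrableOn (s := Set.Iic s))
    rw [show (∫ u in Set.Iic s, Real.exp (-u^2/2)) =
      (∫ u in Set.Iic (0:ℝ), Real.exp (-u^2/2)) + ∫ u in (0:ℝ)..s, Real.exp (-u^2/2) by linarith]
  have hd : HasDerivAt (fun s => ∫ u in (0:ℝ)..s, Real.exp (-u^2/2)) (Real.exp (-t^2/2)) t :=
    intervalIntegral.integral_hasDerivAt_right gauss_integrable.intervalIntegrable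
      (hc.stronglyMeasurableAtFilter _ _) hc.continuousAt
  rw [show Phi = fun s => (Real.sqrt (2 * Real.pi))⁻¹ *
      ((∫ u in Set.Iic (0:ℝ), Real.exp (-u^2/2)) + ∫ u in (0:ℝ)..s, Real.exp (-u^2/2))
    from funext key]
  exact (hd.const_add _).const_mul _

theorem stmt7 (ε : ℝ) (hε : 0 ≤ ε) :
    StrictMonoOn (fun x : ℝ => Phi (x/2 - ε/x) - Real.exp ε * Phi (-x/2 - ε/x))
      (Set.Ioi 0) := by
  set c : ℝ := (Real.sqrt (2 * Real.pi))⁻¹ with hc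
  have hcpos : 0 < c := by
    rw [hc]
    positivity
  have hg : ∀ x ∈ Set.Ioi (0:ℝ),
      HasDerivAt (fun x : ℝ => Phi (x/2 - ε/x) - Real.exp ε * Phi (-x/2 - ε/x))
        (c * Real.exp (-(x/2 - ε/x)^2/2)) x := by
    intro x hx
    have hx0 : x ≠ 0 := ne_of_gt hx
    have h1 : HasDerivAt (fun x : ℝ => x/2 - ε/x) (1/2 + ε/x^2) x := by
      have := ((hasDerivAt_id x).div_const 2).sub
        ((hasDerivAt_const x ε).div (hasDerivAt_id x) hx0)
      refine this.congr_deriv ?_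
      simp only [id]
      field_simp
      ring
    have h2 : HasDerivAt (fun x : ℝ => -x/2 - ε/x) (-(1/2) + ε/x^2) x := by
      have := (((hasDerivAt_id x).neg).div_const 2).sub
        ((hasDerivAt_const x ε).div (hasDerivAt_id x) hx0)
      refine this.congr_deriv ?_
      simp only [id]
      field_simp
      ring
    have hP1 := (hasDerivAt_Phi (x/2 - ε/x)).comp x h1
    have hP2 := ((hasDerivAt_Phi (-x/2 - ε/x)).comp x h2).const_mul (Real.exp ε)
    have := hP1.sub hP2
    refine this.congr_deriv ?_
    have hexp : Real.exp ε * (c * Real.exp (-(-x/2 - ε/x)^2/2)) =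
        c * Real.exp (-(x/2 - ε/x)^2/2) := by
      rw [mul_left_comm, ← Real.exp_add]
      congr 2
      field_simp
      ring
    simp only [hc] at hexp ⊢
    linear_combination (-(-(1/2) + ε/x^2)) * hexp
  apply StrictMonoOn.mono (s := Set.Ioi 0) ?_ le_rfl
  apply strictMonoOn_of_deriv_pos (convex_Ioi 0)
  · exact fun x hx => (hg x hx).continuousAt.continuousWithinAt
  · intro x hx
    rw [interior_Ioi] at hx
    rw [(hg x hx).deriv]
    positivity
end

section
/- As ε → 0⁺, the unique positive root B(ε) of the equation Φ(x/2 − ε/x) − e^ε Φ(−x/2 − ε/x) = δ converges to 2 Φ⁻¹(δ/2 + 1/2), where Φ⁻¹ is the inverse of the standard normal CDF. -/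
open MeasureTheory ProbabilityTheory Filter

namespace PhiAux

noncomputable def f (u : ℝ) : ℝ := Real.exp (-u^2/2)

lemma Phi_eq (t : ℝ) : Phi t = (Real.sqrt (2 * Real.pi))⁻¹ * ∫ u in Set.Iic t, f u := rfl

lemma f_eq : f = fun u => Real.exp (-(1/2) * u ^ 2) := by
  funext u; simp only [f]; ring_nf

lemma f_int : Integrable f := by
  rw [f_eq]; exact integrable_exp_neg_mul_sq (by norm_num)

lemma f_pos (u : ℝ) : 0 < f u := Real.exp_pos _

lemma f_le_one (u : ℝ) : f u ≤ 1 := by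
  unfold f
  rw [show (1:ℝ) = Real.exp 0 by simp]
  apply Real.exp_le_exp.2
  nlinarith [sq_nonneg u]

lemma int_all : ∫ u, f u = Real.sqrt (2 * Real.pi) := by
  rw [f_eq, integral_gaussian, show Real.pi / (1/2) = 2 * Real.pi by ring]

lemma Phi_strictMono : StrictMono Phi := by
  intro x y hxy
  rw [Phi_eq, Phi_eq]
  have h : (∫ u in Set.Iic x, f u) < ∫ u in Set.Iic y, f u := by
    have hsub : (∫ u in Set.Iic y, f u) - ∫ u in Set.Iic x, f u = ∫ u in x..y, f u :=
      intervalIntegral.integral_Iic_sub_Iic f_int.integrableOn f_int.integrableOn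
    have hpos : 0 < ∫ u in x..y, f u :=
      intervalIntegral.intervalIntegral_pos_of_pos_on
        f_int.intervalIntegrable (fun u _ => f_pos u) hxy
    linarith
  exact mul_lt_mul_of_pos_left h (by positivity)

lemma Phi_mono : Monotone Phi := Phi_strictMono.monotone

lemma Phi_nonneg (x : ℝ) : 0 ≤ Phi x := by
  rw [Phi_eq]
  apply mul_nonneg (by positivity)
  exact setIntegral_nonneg measurableSet_Iic (fun u _ => (f_pos u).le)

lemma Phi_lipschitz {x y : ℝ} (h : x ≤ y) :
    Phi y - Phi x ≤ (Real.sqrt (2 * Real.pi))⁻¹ * (y - x) := by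
  rw [Phi_eq, Phi_eq, ← mul_sub]
  have hsub : (∫ u in Set.Iic y, f u) - ∫ u in Set.Iic x, f u = ∫ u in x..y, f u :=
    intervalIntegral.integral_Iic_sub_Iic f_int.integrableOn f_int.integrableOn
  have hle : (∫ u in x..y, f u) ≤ y - x := by
    rw [intervalIntegral.integral_of_le h]
    calc (∫ u in Set.Ioc x y, f u) ≤ ∫ _u in Set.Ioc x y, (1:ℝ) :=
          setIntegral_mono_on f_int.integrableOn (integrableOn_const (by simp))
            measurableSet_Ioc (fun u _ => f_le_one u)
      _ = y - x := by
          rw [setIntegral_const]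
          simp [Real.volume_Ioc, ENNReal.toReal_ofReal (sub_nonneg.2 h), h]
  rw [hsub]
  exact mul_le_mul_of_nonneg_left hle (by positivity)

lemma Phi_add_neg (x : ℝ) : Phi x + Phi (-x) = 1 := by
  rw [Phi_eq, Phi_eq]
  have hneg : (∫ u in Set.Iic (-x), f u) = ∫ u in Set.Ioi x, f u := by
    have h2 : (∫ u in Set.Iic (-x), f (-u)) = ∫ u in Set.Ioi x, f u := by
      rw [integral_comp_neg_Iic]; simp
    rw [← h2]
    congr 1; funext u; unfold f; ring_nf
  rw [hneg, ← mul_add, intervalIntegral.integral_Iic_add_Ioi f_int.integrableOn f_int.integrableOn, int_all]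
  have : Real.sqrt (2 * Real.pi) ≠ 0 := by positivity
  field_simp

lemma Phi_lt_one (x : ℝ) : Phi x < 1 := by
  have h := Phi_add_neg x
  have h3 : Phi (-x - 1) < Phi (-x) := Phi_strictMono (by linarith)
  have h4 : 0 ≤ Phi (-x - 1) := Phi_nonneg _
  linarith

end PhiAux

open PhiAux in
theorem stmt13 (δ : ℝ) (hδ : δ ∈ Set.Ioo (0:ℝ) 1) (B : ℝ → ℝ)
    (hB : ∀ ε : ℝ, 0 < ε → 0 < B ε ∧
      Phi (B ε/2 - ε/(B ε)) - Real.exp ε * Phi (-(B ε)/2 - ε/(B ε)) = δ)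
    (c : ℝ) (hc : Phi c = δ/2 + 1/2) :
    Tendsto B (nhdsWithin 0 (Set.Ioi 0)) (nhds (2*c)) := by
  obtain ⟨hδ0, hδ1⟩ := hδ
  have hKpos : 0 < (Real.sqrt (2 * Real.pi))⁻¹ := by positivity
  set L := δ * Real.sqrt (2 * Real.pi) with hL
  have hLpos : 0 < L := by rw [hL]; positivity
  -- lower bound on B
  have hBL : ∀ ε : ℝ, 0 < ε → L ≤ B ε := by
    intro ε hε
    obtain ⟨hBpos, heq⟩ := hB ε hε
    have huw : -(B ε)/2 - ε/(B ε) ≤ B ε/2 - ε/(B ε) := by linarith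
    have h1 : δ ≤ Phi (B ε/2 - ε/(B ε)) - Phi (-(B ε)/2 - ε/(B ε)) := by
      have hexp : 1 ≤ Real.exp ε := Real.one_le_exp hε.le
      have hmul : Phi (-(B ε)/2 - ε/(B ε)) ≤ Real.exp ε * Phi (-(B ε)/2 - ε/(B ε)) :=
        le_mul_of_one_le_left (Phi_nonneg _) hexp
      linarith
    have h2 := Phi_lipschitz huw
    have h3 : B ε/2 - ε/(B ε) - (-(B ε)/2 - ε/(B ε)) = B ε := by ring
    rw [h3] at h2
    have h4 : δ ≤ (Real.sqrt (2 * Real.pi))⁻¹ * B ε := by linarith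
    have h6 := mul_le_mul_of_nonneg_right h4 (Real.sqrt_nonneg (2 * Real.pi))
    have h7 : ((Real.sqrt (2 * Real.pi))⁻¹ * B ε) * Real.sqrt (2 * Real.pi) = B ε := by
      field_simp
    rw [h7] at h6
    rw [hL]; linarith
  rw [Metric.tendsto_nhdsWithin_nhds]
  intro η hη
  set P := Phi (c + η/8) with hP
  have hPgt : (δ + 1) / 2 < P := by
    have := Phi_strictMono (show c < c + η/8 by linarith)
    rw [hc] at this; rw [hP]; linarith
  have hPlt1 : P < 1 := Phi_lt_one _
  have hR : 1 < (P - δ) / (1 - P) := by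
    rw [lt_div_iff₀ (by linarith)]; linarith
  refine ⟨min (Real.log ((P - δ) / (1 - P))) (L * η / 8),
    lt_min (Real.log_pos hR) (by positivity), ?_⟩
  intro ε hεIoi hεd
  have hε : 0 < ε := hεIoi
  have hεlt : ε < min (Real.log ((P - δ) / (1 - P))) (L * η / 8) := by
    rwa [Real.dist_eq, sub_zero, abs_of_pos hε] at hεd
  obtain ⟨hBpos, heq⟩ := hB ε hε
  have hBL' := hBL ε hε
  set t := ε / B ε with ht
  have htpos : 0 < t := div_pos hε hBpos
  have hwv : -(B ε) / 2 - t = -(B ε / 2 + t) := by ring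
  rw [hwv] at heq
  have hPhineg : Phi (-(B ε / 2 + t)) = 1 - Phi (B ε / 2 + t) := by
    have := Phi_add_neg (B ε / 2 + t); linarith
  rw [hPhineg] at heq
  have hexp1 : 1 ≤ Real.exp ε := Real.one_le_exp hε.le
  have hexppos : (0:ℝ) < Real.exp ε := Real.exp_pos ε
  have hPhiuv : Phi (B ε / 2 - t) ≤ Phi (B ε / 2 + t) := Phi_mono (by linarith)
  have ht8 : t < η / 8 := by
    have h1 : ε < L * η / 8 := lt_of_lt_of_le hεlt (min_le_right _ _)
    have h2 : t ≤ ε / L := by rw [ht]; gcongr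
    have h3 : ε / L < η / 8 := by
      rw [div_lt_iff₀ hLpos]
      have : L * η / 8 = η / 8 * L := by ring
      linarith
    linarith
  -- lower bound: B ε/2 + t ≥ c
  have hvc : c ≤ B ε / 2 + t := by
    by_contra hcon
    push_neg at hcon
    have h5 : Phi (B ε / 2 + t) < Phi c := Phi_strictMono hcon
    rw [hc] at h5
    have hA : Real.exp ε * Phi (B ε / 2 + t) < Real.exp ε * (δ/2 + 1/2) :=
      mul_lt_mul_of_pos_left h5 hexppos
    have hB2 : (1 - δ) ≤ Real.exp ε * (1 - δ) :=
      le_mul_of_one_le_left (by linarith) hexp1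
    have hexpand : Real.exp ε * (δ/2 + 1/2) = Real.exp ε * δ / 2 + Real.exp ε / 2 := by ring
    have hexpand2 : Real.exp ε * (1 - δ) = Real.exp ε - Real.exp ε * δ := by ring
    have hexpand3 : Real.exp ε * (1 - Phi (B ε / 2 + t))
        = Real.exp ε - Real.exp ε * Phi (B ε / 2 + t) := by ring
    rw [hexpand3] at heq
    rw [hexpand] at hA
    rw [hexpand2] at hB2
    linarith
  have hlow : 2 * c - η < B ε := by
    have hBt : B ε = 2 * (B ε / 2 + t) - 2 * t := by ring
    linarith
  -- upper bound
  have hexpR : Real.exp ε * (1 - P) < P - δ := by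
    have h9 : ε < Real.log ((P - δ) / (1 - P)) := lt_of_lt_of_le hεlt (min_le_left _ _)
    have h10 : Real.exp ε < (P - δ) / (1 - P) := by
      calc Real.exp ε < Real.exp (Real.log ((P - δ) / (1 - P))) := Real.exp_lt_exp.2 h9
        _ = (P - δ) / (1 - P) := Real.exp_log (by linarith)
    rwa [lt_div_iff₀ (by linarith : (0:ℝ) < 1 - P)] at h10
  have huc : B ε / 2 - t < c + η/8 := by
    by_contra hcon
    push_neg at hcon
    have h6 : P ≤ Phi (B ε / 2 - t) := hP ▸ Phi_mono hcon
    have hA : Real.exp ε * (1 - Phi (B ε / 2 + t)) ≤ Real.exp ε * (1 - P) :=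
      mul_le_mul_of_nonneg_left (by linarith) hexppos.le
    linarith
  have hhigh : B ε < 2 * c + η := by
    have hBt : B ε = 2 * (B ε / 2 - t) + 2 * t := by ring
    linarith
  rw [Real.dist_eq, abs_lt]
  constructor <;> linarith
end
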